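/- arXiv:1202.5020 — 4 statements merged into one kernel-verified Lean document; each statement's English description precedes it below -/
import Mathlib

section
/- Fix real numbers n ≥ 5 and 4 < t_0 < 5. Then there is a constant A(t_0) > 0 (depending only on t_0) such that for all t ∈ [t_0, n) and all k ∈ ℕ, 0 < S_{2k}(√t)/S_{2k}(√n) ≤ A(t_0)·(t/n)^k. -/
lemma closed_form (S : ℕ → ℝ → ℝ)
    (hS0 : ∀ x, S 0 x = 1) (hS1 : ∀ x, S 1 x = x)
    (hSrec : ∀ k, 1 ≤ k → ∀ x, x * S k x = S (k + 1) x + S (k - 1) x)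
    (l : ℝ) (hl : 1 < l) :
    ∀ k, S k (l + l⁻¹) = (l ^ (k+1) - (l⁻¹) ^ (k+1)) / (l - l⁻¹) := by
  have hl0 : (0:ℝ) < l := by linarith
  have hne : l ≠ 0 := ne_of_gt hl0
  have hinv : l⁻¹ < 1 := by
    rw [inv_lt_one_iff₀]; right; exact hl
  have hd : l - l⁻¹ ≠ 0 := by
    have : l⁻¹ < l := lt_trans hinv hl
    linarith
  have lm1 : l * l⁻¹ = 1 := mul_inv_cancel₀ hne
  have key : ∀ k, S k (l + l⁻¹) = (l ^ (k+1) - (l⁻¹) ^ (k+1)) / (l - l⁻¹) ∧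
      S (k+1) (l + l⁻¹) = (l ^ (k+2) - (l⁻¹) ^ (k+2)) / (l - l⁻¹) := by
    intro k
    induction k with
    | zero =>
      constructor
      · rw [hS0, eq_div_iff hd]; ring
      · rw [hS1, eq_div_iff hd]; ring
    | succ m ih =>
      obtain ⟨ih1, ih2⟩ := ih
      refine ⟨ih2, ?_⟩
      have hr := hSrec (m+1) (by omega) (l + l⁻¹)
      simp only [Nat.add_sub_cancel] at hr
      have hstep : S (m+1+1) (l + l⁻¹) = (l + l⁻¹) * S (m+1) (l + l⁻¹) - S m (l + l⁻¹) := by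
        linarith [hr]
      have hnum : (l+l⁻¹)*(l^(m+2)-(l⁻¹)^(m+2)) - (l^(m+1)-(l⁻¹)^(m+1))
          = l^(m+3) - (l⁻¹)^(m+3) := by
        linear_combination (l^(m+1) - (l⁻¹)^(m+1)) * lm1
      calc S (m+1+1) (l + l⁻¹)
          = ((l+l⁻¹)*(l^(m+2)-(l⁻¹)^(m+2)) - (l^(m+1)-(l⁻¹)^(m+1)))/(l - l⁻¹) := by
            rw [hstep, ih1, ih2]; ring
        _ = (l ^ (m+1+1+1) - (l⁻¹) ^ (m+1+1+1)) / (l - l⁻¹) := by rw [hnum]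
  exact fun k => (key k).1

lemma lam_base (u : ℝ) (hu : 4 < u) :
    1 < (Real.sqrt u + Real.sqrt (u-4))/2 ∧
    (Real.sqrt u + Real.sqrt (u-4))/2 + ((Real.sqrt u + Real.sqrt (u-4))/2)⁻¹ = Real.sqrt u ∧
    ((Real.sqrt u + Real.sqrt (u-4))/2)^2 = (u - 2 + Real.sqrt u * Real.sqrt (u-4))/2 := by
  have hu0 : (0:ℝ) < u := by linarith
  have h4 : (0:ℝ) ≤ u - 4 := by linarith
  have hsq : Real.sqrt u ^ 2 = u := Real.sq_sqrt hu0.le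
  have hsq4 : Real.sqrt (u-4) ^ 2 = u - 4 := Real.sq_sqrt h4
  have h2lt : 2 < Real.sqrt u := by
    have h1 : Real.sqrt 4 < Real.sqrt u := Real.sqrt_lt_sqrt (by norm_num) hu
    have h2 : Real.sqrt 4 = 2 := by
      rw [show (4:ℝ) = 2^2 by norm_num, Real.sqrt_sq (by norm_num : (0:ℝ) ≤ 2)]
    linarith
  have h40 : 0 ≤ Real.sqrt (u-4) := Real.sqrt_nonneg _
  set l := (Real.sqrt u + Real.sqrt (u-4))/2 with hl
  have hl1 : 1 < l := by rw [hl]; linarith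
  have hlne : l ≠ 0 := by intro h; rw [h] at hl1; norm_num at hl1
  have hmul : l * (Real.sqrt u - l) = 1 := by
    rw [hl]; linear_combination (1/4)*hsq - (1/4)*hsq4
  have hinv : l⁻¹ = Real.sqrt u - l := inv_eq_of_mul_eq_one_right hmul
  refine ⟨hl1, by rw [hinv]; ring, ?_⟩
  rw [hl]; linear_combination (1/4)*hsq + (1/4)*hsq4

set_option maxHeartbeats 1600000 in
/-- Fix `n ≥ 5` and `4 < t₀ < 5`.  Then there is a constant `A(t₀) > 0` depending only on
`t₀` such that for all `t ∈ [t₀, n)` and all `k ∈ ℕ`,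
`0 < S_{2k}(√t)/S_{2k}(√n) ≤ A(t₀)·(t/n)^k`. -/
theorem stmt3 (S : ℕ → ℝ → ℝ)
    (hS0 : ∀ x, S 0 x = 1) (hS1 : ∀ x, S 1 x = x)
    (hSrec : ∀ k, 1 ≤ k → ∀ x, x * S k x = S (k + 1) x + S (k - 1) x)
    (n t₀ : ℝ) (hn : 5 ≤ n) (ht₀ : 4 < t₀) (ht₀' : t₀ < 5) :
    ∃ A : ℝ, 0 < A ∧ ∀ t : ℝ, t₀ ≤ t → t < n → ∀ k : ℕ,
      0 < S (2 * k) (Real.sqrt t) / S (2 * k) (Real.sqrt n) ∧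
      S (2 * k) (Real.sqrt t) / S (2 * k) (Real.sqrt n) ≤ A * (t / n) ^ k := by
  refine ⟨(t₀-2)/(t₀-4), div_pos (by linarith) (by linarith), ?_⟩
  intro t ht1 ht2 k
  set A := (t₀-2)/(t₀-4) with hA
  have hApos : 0 < A := div_pos (by linarith) (by linarith)
  have ht4 : 4 < t := lt_of_lt_of_le ht₀ ht1
  have hn4 : 4 < n := by linarith
  have hn0 : (0:ℝ) < n := by linarith
  have ht0 : (0:ℝ) < t := by linarith
  obtain ⟨hlt1, hlts, hlt2⟩ := lam_base t ht4
  obtain ⟨hln1, hlns, hln2⟩ := lam_base n hn4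
  set lt := (Real.sqrt t + Real.sqrt (t-4))/2 with hltdef
  set ln := (Real.sqrt n + Real.sqrt (n-4))/2 with hlndef
  have hlt0 : (0:ℝ) < lt := by linarith
  have hln0 : (0:ℝ) < ln := by linarith
  have hltinv1 : lt⁻¹ < 1 := by rw [inv_lt_one_iff₀]; right; exact hlt1
  have hlninv1 : ln⁻¹ < 1 := by rw [inv_lt_one_iff₀]; right; exact hln1
  have hltinv0 : 0 < lt⁻¹ := inv_pos.mpr hlt0
  have hlninv0 : 0 < ln⁻¹ := inv_pos.mpr hln0
  have hdtpos : 0 < lt - lt⁻¹ := by linarith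
  have hdnpos : 0 < ln - ln⁻¹ := by linarith
  have hltm : lt * lt⁻¹ = 1 := mul_inv_cancel₀ (ne_of_gt hlt0)
  have hlnm : ln * ln⁻¹ = 1 := mul_inv_cancel₀ (ne_of_gt hln0)
  -- closed forms
  have cfT : S (2*k) (Real.sqrt t) = (lt ^ (2*k+1) - (lt⁻¹) ^ (2*k+1)) / (lt - lt⁻¹) := by
    rw [← hlts]; exact closed_form S hS0 hS1 hSrec lt hlt1 (2*k)
  have cfN : S (2*k) (Real.sqrt n) = (ln ^ (2*k+1) - (ln⁻¹) ^ (2*k+1)) / (ln - ln⁻¹) := by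
    rw [← hlns]; exact closed_form S hS0 hS1 hSrec ln hln1 (2*k)
  -- positivity
  have hStpos : 0 < S (2*k) (Real.sqrt t) := by
    rw [cfT]
    apply div_pos _ hdtpos
    have h1 : (lt⁻¹) ^ (2*k+1) < 1 := pow_lt_one₀ hltinv0.le hltinv1 (by omega)
    have h2 : (1:ℝ) ≤ lt ^ (2*k+1) := one_le_pow₀ hlt1.le
    linarith
  have hSnpos : 0 < S (2*k) (Real.sqrt n) := by
    rw [cfN]
    apply div_pos _ hdnpos
    have h1 : (ln⁻¹) ^ (2*k+1) < 1 := pow_lt_one₀ hlninv0.le hlninv1 (by omega)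
    have h2 : (1:ℝ) ≤ ln ^ (2*k+1) := one_le_pow₀ hln1.le
    linarith
  refine ⟨div_pos hStpos hSnpos, ?_⟩
  -- (i) lower bound on S_n
  have hSnlow : ln ^ (2*k) ≤ S (2*k) (Real.sqrt n) := by
    rw [cfN, le_div_iff₀ hdnpos]
    have h1 : (ln⁻¹) ^ (2*k) ≤ ln ^ (2*k) := pow_le_pow_left₀ hlninv0.le (by linarith) _
    have h2 : (ln⁻¹) ^ (2*k+1) ≤ ln ^ (2*k) * ln⁻¹ := by
      rw [pow_succ]
      exact mul_le_mul_of_nonneg_right h1 hlninv0.le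
    calc ln ^ (2*k) * (ln - ln⁻¹) = ln ^ (2*k+1) - ln ^ (2*k) * ln⁻¹ := by rw [pow_succ]; ring
      _ ≤ ln ^ (2*k+1) - (ln⁻¹) ^ (2*k+1) := by linarith
  -- (ii) upper bound on S_t : S_t ≤ A * lt^(2k)
  have hlthalf : (t₀-2)/2 ≤ lt^2 := by
    rw [hlt2]
    have : 0 ≤ Real.sqrt t * Real.sqrt (t-4) :=
      mul_nonneg (Real.sqrt_nonneg _) (Real.sqrt_nonneg _)
    linarith
  have hlt21 : lt^2 - 1 = lt * (lt - lt⁻¹) := by linear_combination hltm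
  have hAkey : lt ≤ A * (lt - lt⁻¹) := by
    have step1 : lt^2 * (t₀-4) ≤ (t₀-2) * (lt^2 - 1) := by nlinarith only [hlthalf]
    have step2 : lt^2 ≤ A * (lt^2 - 1) := by
      rw [hA, div_mul_eq_mul_div, le_div_iff₀ (by linarith : (0:ℝ) < t₀ - 4)]
      linarith only [step1]
    have h6 : lt * lt ≤ lt * (A * (lt - lt⁻¹)) := by
      have e : lt * (A * (lt - lt⁻¹)) = A * (lt^2 - 1) := by rw [hlt21]; ring
      rw [e, ← pow_two]; exact step2
    exact le_of_mul_le_mul_left h6 hlt0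
  have hStup : S (2*k) (Real.sqrt t) ≤ A * lt ^ (2*k) := by
    rw [cfT, div_le_iff₀ hdtpos]
    have hmtpow : 0 ≤ (lt⁻¹) ^ (2*k+1) := pow_nonneg hltinv0.le _
    have h1 : lt ^ (2*k+1) = lt ^ (2*k) * lt := pow_succ lt (2*k)
    have h2 : lt ^ (2*k) * lt ≤ lt ^ (2*k) * (A * (lt - lt⁻¹)) :=
      mul_le_mul_of_nonneg_left hAkey (pow_nonneg hlt0.le _)
    calc lt ^ (2*k+1) - (lt⁻¹) ^ (2*k+1) ≤ lt ^ (2*k+1) := by linarith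
      _ = lt ^ (2*k) * lt := h1
      _ ≤ lt ^ (2*k) * (A * (lt - lt⁻¹)) := h2
      _ = A * lt ^ (2*k) * (lt - lt⁻¹) := by ring
  -- (iii) lt^(2k) ≤ (t/n)^k * ln^(2k)
  have hmono : n * lt^2 ≤ t * ln^2 := by
    rw [hlt2, hln2]
    set at_ := Real.sqrt t * Real.sqrt (t-4) with hat
    set an_ := Real.sqrt n * Real.sqrt (n-4) with han
    have hat0 : 0 ≤ at_ := mul_nonneg (Real.sqrt_nonneg _) (Real.sqrt_nonneg _)
    have han0 : 0 ≤ an_ := mul_nonneg (Real.sqrt_nonneg _) (Real.sqrt_nonneg _)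
    have hat2 : at_^2 = t * (t-4) := by
      rw [hat, mul_pow, Real.sq_sqrt ht0.le, Real.sq_sqrt (by linarith : (0:ℝ) ≤ t - 4)]
    have han2 : an_^2 = n * (n-4) := by
      rw [han, mul_pow, Real.sq_sqrt hn0.le, Real.sq_sqrt (by linarith : (0:ℝ) ≤ n - 4)]
    have hatpos : 0 < at_ := by
      rw [hat]
      exact mul_pos (Real.sqrt_pos.mpr ht0) (Real.sqrt_pos.mpr (by linarith))
    have hanpos : 0 < an_ := by
      rw [han]
      exact mul_pos (Real.sqrt_pos.mpr hn0) (Real.sqrt_pos.mpr (by linarith))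
    have e1 : (n*at_)^2 = n^2*(t*(t-4)) := by rw [mul_pow, hat2]
    have e2 : (t*an_)^2 = t^2*(n*(n-4)) := by rw [mul_pow, han2]
    have e3 : (n*at_)^2 ≤ (t*an_)^2 := by
      rw [e1, e2]
      nlinarith only [mul_nonneg (mul_nonneg ht0.le hn0.le) (sub_nonneg.mpr ht2.le)]
    have hsum : 0 < n*at_ + t*an_ := by positivity
    have hkey : n * at_ ≤ t * an_ := by nlinarith only [e3, hsum]
    linarith only [hkey, ht2]
  have hsq_le : lt^2 ≤ (t/n) * ln^2 := by
    rw [div_mul_eq_mul_div, le_div_iff₀ hn0]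
    linarith [hmono]
  have hiii : lt ^ (2*k) ≤ (t/n)^k * ln ^ (2*k) := by
    have h1 : (lt^2)^k ≤ ((t/n) * ln^2)^k :=
      pow_le_pow_left₀ (sq_nonneg lt) hsq_le k
    calc lt ^ (2*k) = (lt^2)^k := by rw [← pow_mul]
      _ ≤ ((t/n) * ln^2)^k := h1
      _ = (t/n)^k * ln ^ (2*k) := by rw [mul_pow, ← pow_mul]
  -- combine
  rw [div_le_iff₀ hSnpos]
  have htn : 0 < (t/n)^k := pow_pos (div_pos ht0 hn0) k
  calc S (2*k) (Real.sqrt t) ≤ A * lt ^ (2*k) := hStup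
    _ ≤ A * ((t/n)^k * ln ^ (2*k)) := mul_le_mul_of_nonneg_left hiii hApos.le
    _ ≤ A * ((t/n)^k * S (2*k) (Real.sqrt n)) := by
        apply mul_le_mul_of_nonneg_left _ hApos.le
        exact mul_le_mul_of_nonneg_left hSnlow htn.le
    _ = A * (t/n)^k * S (2*k) (Real.sqrt n) := by ring
end

section
/- Let 0 < q < 1. There exist constants 0 < D' ≤ D'' (depending only on q) such that for all n, k ∈ ℕ and all 0 ≤ r ≤ 2·min{n,k}, setting l = n + k - r, one has D' ≤ [r+1]_q² · [2l+1]_q / ([2n+1]_q · [2k+1]_q) ≤ D''. -/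
/-- The `q`-number `[a]_q = (qᵃ - q⁻ᵃ)/(q - q⁻¹)`. -/
noncomputable def qnum (q : ℝ) (a : ℕ) : ℝ := (q ^ a - q⁻¹ ^ a) / (q - q⁻¹)

lemma qnum_eq (q : ℝ) (hq : 0 < q) (hq1 : q < 1) (a : ℕ) :
    qnum q a = q * (1 - q ^ (2 * a)) / (q ^ a * (1 - q ^ 2)) := by
  have hq0 : q ≠ 0 := ne_of_gt hq
  have h1 : (1 : ℝ) - q ^ 2 ≠ 0 := by nlinarith
  have hlt : q < q⁻¹ := lt_trans hq1 ((one_lt_inv₀ hq).mpr hq1)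
  unfold qnum
  rw [div_eq_div_iff (sub_ne_zero.mpr (ne_of_lt hlt)) (by positivity)]
  field_simp
  have h : q ^ a * q⁻¹ ^ a = 1 := by rw [← mul_pow, mul_inv_cancel₀ hq0, one_pow]
  linear_combination (q ^ 2 - 1) * h

/-- For `0 < q < 1` there exist constants `0 < D' ≤ D''` (depending only on `q`) such that
for all `n, k ∈ ℕ` and all `0 ≤ r ≤ 2·min{n,k}`, with `l = n + k - r`,
`D' ≤ [r+1]_q²·[2l+1]_q/([2n+1]_q·[2k+1]_q) ≤ D''`. -/
theorem stmt7 (q : ℝ) (hq : 0 < q) (hq1 : q < 1) :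
    ∃ D' D'' : ℝ, 0 < D' ∧ D' ≤ D'' ∧
      ∀ n k r : ℕ, r ≤ 2 * min n k →
        D' ≤ qnum q (r + 1) ^ 2 * qnum q (2 * (n + k - r) + 1) /
              (qnum q (2 * n + 1) * qnum q (2 * k + 1)) ∧
        qnum q (r + 1) ^ 2 * qnum q (2 * (n + k - r) + 1) /
              (qnum q (2 * n + 1) * qnum q (2 * k + 1)) ≤ D'' := by
  have hq0 : q ≠ 0 := ne_of_gt hq
  set c : ℝ := 1 - q ^ 2 with hc
  have hcpos : 0 < c := by nlinarith
  have hc1 : c < 1 := by nlinarith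
  refine ⟨c ^ 2, 1 / c ^ 3, by positivity, ?_, ?_⟩
  · rw [le_div_iff₀ (by positivity)]
    have h5 : c ^ 5 ≤ 1 := pow_le_one₀ hcpos.le hc1.le
    nlinarith [h5]
  intro n k r hr
  set l : ℕ := n + k - r with hl
  have hrl : r + l = n + k := by omega
  -- bounds for the factors 1 - q^e with e ≥ 2
  have hfac : ∀ e : ℕ, 2 ≤ e → c ≤ 1 - q ^ e ∧ 1 - q ^ e ≤ 1 := by
    intro e he
    have h1 : q ^ e ≤ q ^ 2 := pow_le_pow_of_le_one (le_of_lt hq) (le_of_lt hq1) he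
    have h2 : 0 < q ^ e := pow_pos hq e
    refine ⟨by rw [hc]; nlinarith, by nlinarith⟩
  obtain ⟨hA1, hA2⟩ := hfac (2 * (r + 1)) (by omega)
  obtain ⟨hB1, hB2⟩ := hfac (2 * (2 * l + 1)) (by omega)
  obtain ⟨hC1, hC2⟩ := hfac (2 * (2 * n + 1)) (by omega)
  obtain ⟨hD1, hD2⟩ := hfac (2 * (2 * k + 1)) (by omega)
  set A : ℝ := 1 - q ^ (2 * (r + 1)) with hA
  set B : ℝ := 1 - q ^ (2 * (2 * l + 1)) with hB
  set C : ℝ := 1 - q ^ (2 * (2 * n + 1)) with hC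
  set D : ℝ := 1 - q ^ (2 * (2 * k + 1)) with hD
  have hApos : 0 < A := lt_of_lt_of_le hcpos hA1
  have hBpos : 0 < B := lt_of_lt_of_le hcpos hB1
  have hCpos : 0 < C := lt_of_lt_of_le hcpos hC1
  have hDpos : 0 < D := lt_of_lt_of_le hcpos hD1
  have hQ : q ^ (2 * n + 1) * q ^ (2 * k + 1) * q ^ 3 =
      (q ^ (r + 1)) ^ 2 * q ^ (2 * l + 1) * q ^ 2 := by
    simp only [← pow_mul, ← pow_add]
    congr 1
    omega
  have key : qnum q (r + 1) ^ 2 * qnum q (2 * (n + k - r) + 1) /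
      (qnum q (2 * n + 1) * qnum q (2 * k + 1)) = A ^ 2 * B / (C * D * c) := by
    have h1 : qnum q (r + 1) ^ 2 * qnum q (2 * (n + k - r) + 1) /
        (qnum q (2 * n + 1) * qnum q (2 * k + 1)) =
        (A ^ 2 * B / (C * D * c)) *
        ((q ^ (2 * n + 1) * q ^ (2 * k + 1) * q ^ 3) /
          ((q ^ (r + 1)) ^ 2 * q ^ (2 * l + 1) * q ^ 2)) := by
      rw [qnum_eq q hq hq1, qnum_eq q hq hq1, qnum_eq q hq hq1, qnum_eq q hq hq1]
      rw [← hl]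
      rw [← hA, ← hB, ← hC, ← hD, ← hc]
      field_simp
    rw [h1, hQ, div_self (by positivity), mul_one]
  rw [key]
  have t1 : c * c ≤ A * A := mul_le_mul hA1 hA1 hcpos.le (hcpos.le.trans hA1)
  have t2 : c ^ 3 ≤ A ^ 2 * B := by
    calc c ^ 3 = c * c * c := by ring
    _ ≤ A * A * B := mul_le_mul t1 hB1 hcpos.le (by positivity)
    _ = A ^ 2 * B := by ring
  have hCD : C * D ≤ 1 := mul_le_one₀ hC2 hDpos.le hD2
  have t3 : C * D * c ≤ c := by
    calc C * D * c ≤ 1 * c := mul_le_mul_of_nonneg_right hCD hcpos.le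
    _ = c := one_mul c
  constructor
  · rw [le_div_iff₀ (by positivity)]
    calc c ^ 2 * (C * D * c) ≤ c ^ 2 * c := mul_le_mul_of_nonneg_left t3 (sq_nonneg c)
    _ = c ^ 3 := by ring
    _ ≤ A ^ 2 * B := t2
  · rw [div_le_div_iff₀ (by positivity) (by positivity)]
    have u1 : A ^ 2 * B ≤ 1 := mul_le_one₀ (pow_le_one₀ hApos.le hA2) hBpos.le hB2
    have u2 : c ^ 3 ≤ C * D * c := by
      calc c ^ 3 = c * c * c := by ring
      _ ≤ C * D * c :=
        mul_le_mul (mul_le_mul hC1 hD1 hcpos.le (hcpos.le.trans hC1)) le_rfl hcpos.le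
          (by positivity)
    calc A ^ 2 * B * c ^ 3 ≤ 1 * c ^ 3 := mul_le_mul_of_nonneg_right u1 (by positivity)
    _ = c ^ 3 := one_mul _
    _ ≤ C * D * c := u2
    _ = 1 * (C * D * c) := (one_mul _).symm
end

section
/- Let 0 < q < 1, m_l = [2l+1]_q, and α_l = (∑_{n+k=l} m_n m_k / m_l)^{-1/2}. Then sup over l ≥ 1 of max_{|l'-l| ≤ 1} |α_l^{-1} - α_{l'}^{-1}| is finite. -/
namespace Stmt9Aux

variable {q : ℝ}

lemma basic (hq : 0 < q) (hq1 : q < 1) : q < q⁻¹ ∧ (0:ℝ) < 1 - q^2 := by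
  constructor
  · have h1 : 1 < q⁻¹ := by rw [one_lt_inv_iff₀]; exact ⟨hq, hq1⟩
    linarith
  · nlinarith

lemma qnum_odd (hq : 0 < q) (hq1 : q < 1) (a : ℕ) :
    qnum q (2*a+1) = (1 - q^(4*a+2)) / (q^(2*a) * (1 - q^2)) := by
  have hq0 : q ≠ 0 := ne_of_gt hq
  obtain ⟨hlt, hpos⟩ := basic hq hq1
  have h1 : q⁻¹ - q ≠ 0 := ne_of_gt (by linarith)
  unfold qnum
  rw [inv_pow]
  rw [div_eq_div_iff (by intro h; apply h1; linarith [sub_eq_zero.mp h]) (by positivity)]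
  field_simp
  ring

lemma m_pos (hq : 0 < q) (hq1 : q < 1) (a : ℕ) : 0 < qnum q (2*a+1) := by
  rw [qnum_odd hq hq1]
  obtain ⟨hlt, hpos⟩ := basic hq hq1
  have h2 : q^(4*a+2) < 1 := pow_lt_one₀ hq.le hq1 (by omega)
  have h3 : 0 < q^(2*a) := pow_pos hq _
  exact div_pos (by linarith) (by positivity)

lemma qnum_one (hq : 0 < q) (hq1 : q < 1) : qnum q 1 = 1 := by
  obtain ⟨hlt, hpos⟩ := basic hq hq1
  unfold qnum
  rw [pow_one, pow_one, div_self (by intro h; nlinarith [sub_eq_zero.mp h])]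

/-- product inequality `m j * m (j+n+1) ≤ m (j+1) * m (j+n)` -/
lemma stepA (hq : 0 < q) (hq1 : q < 1) (j n : ℕ) :
    qnum q (2*j+1) * qnum q (2*(j+n+1)+1) ≤ qnum q (2*(j+1)+1) * qnum q (2*(j+n)+1) := by
  obtain ⟨hlt, hpos⟩ := basic hq hq1
  rw [qnum_odd hq hq1, qnum_odd hq hq1, qnum_odd hq hq1, qnum_odd hq hq1]
  rw [div_mul_div_comm, div_mul_div_comm]
  have hden : q^(2*(j+1)) * (1-q^2) * (q^(2*(j+n)) * (1-q^2))
      = q^(2*j) * (1-q^2) * (q^(2*(j+n+1)) * (1-q^2)) := by ring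
  rw [hden]
  have hdpos : 0 < q^(2*j) * (1-q^2) * (q^(2*(j+n+1)) * (1-q^2)) := by positivity
  rw [div_le_div_iff_of_pos_right hdpos]
  have e1 : q^(4*(j+n+1)+2) = q^(4*j+2) * q^(4*n) * q^4 := by ring
  have e2 : q^(4*(j+1)+2) = q^(4*j+2) * q^4 := by ring
  have e3 : q^(4*(j+n)+2) = q^(4*j+2) * q^(4*n) := by ring
  rw [e1, e2, e3]
  have hu : 0 < q^(4*j+2) := pow_pos hq _
  have hv : q^(4*n) ≤ 1 := pow_le_one₀ hq.le hq1.le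
  have hw : q^4 ≤ 1 := pow_le_one₀ hq.le hq1.le
  nlinarith [mul_nonneg (mul_nonneg hu.le (sub_nonneg.2 hv)) (sub_nonneg.2 hw)]

lemma key_id (hq : 0 < q) (hq1 : q < 1) (j n : ℕ) :
    q^(2*n) * qnum q (2*(j+n)+1) - qnum q (2*j+1)
      = (q^(2*j+1) - q^(2*j+4*n+1)) * q / (1 - q^2) := by
  have hq0 : q ≠ 0 := ne_of_gt hq
  obtain ⟨hlt, hpos⟩ := basic hq hq1
  rw [qnum_odd hq hq1, qnum_odd hq hq1]
  have h2 : (1 - q^2) ≠ 0 := ne_of_gt hpos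
  field_simp
  ring

lemma m_le (hq : 0 < q) (hq1 : q < 1) (j n : ℕ) :
    qnum q (2*j+1) ≤ q^(2*n) * qnum q (2*(j+n)+1) := by
  obtain ⟨hlt, hpos⟩ := basic hq hq1
  have h := key_id hq hq1 j n
  have h2 : q^(2*j+4*n+1) ≤ q^(2*j+1) := pow_le_pow_of_le_one hq.le hq1.le (by omega)
  have h3 : (0:ℝ) ≤ (q^(2*j+1) - q^(2*j+4*n+1)) * q / (1 - q^2) := by
    apply div_nonneg _ hpos.le
    exact mul_nonneg (by linarith) hq.le
  linarith

lemma m_diff_le (hq : 0 < q) (hq1 : q < 1) (j n : ℕ) :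
    q^(2*n) * qnum q (2*(j+n)+1) - qnum q (2*j+1) ≤ q^(2*j+2) / (1 - q^2) := by
  obtain ⟨hlt, hpos⟩ := basic hq hq1
  rw [key_id hq hq1 j n]
  have h2 : 0 ≤ q^(2*j+4*n+1) := pow_nonneg hq.le _
  rw [div_le_div_iff_of_pos_right hpos]
  have : q^(2*j+2) = q^(2*j+1) * q := by ring
  nlinarith

lemma m_upper (hq : 0 < q) (hq1 : q < 1) (n : ℕ) :
    qnum q (2*n+1) ≤ q⁻¹^(2*n) / (1 - q^2) := by
  obtain ⟨hlt, hpos⟩ := basic hq hq1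
  rw [qnum_odd hq hq1, inv_pow]
  rw [div_le_div_iff₀ (by positivity) (by positivity)]
  have h2 : 0 < q^(4*n+2) := pow_pos hq _
  have h3 : (q^(2*n))⁻¹ * q^(2*n) = 1 := inv_mul_cancel₀ (by positivity)
  nlinarith

lemma m_lower (hq : 0 < q) (hq1 : q < 1) (l : ℕ) :
    q⁻¹^(2*l) ≤ qnum q (2*l+1) := by
  obtain ⟨hlt, hpos⟩ := basic hq hq1
  rw [qnum_odd hq hq1, inv_pow]
  rw [le_div_iff₀ (by positivity)]
  have h2 : q^(4*l+2) ≤ q^2 := pow_le_pow_of_le_one hq.le hq1.le (by omega)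
  have h3 : (q^(2*l))⁻¹ * q^(2*l) = 1 := inv_mul_cancel₀ (by positivity)
  nlinarith


noncomputable def F (q : ℝ) (l : ℕ) : ℝ :=
  ∑ n ∈ Finset.range (l + 1),
    qnum q (2 * n + 1) * qnum q (2 * (l - n) + 1) / qnum q (2 * l + 1)

lemma term_mono (hq : 0 < q) (hq1 : q < 1) (L n : ℕ) (hn : n ≤ L) :
    qnum q (2*n+1) * qnum q (2*(L-n)+1) / qnum q (2*L+1)
      ≤ qnum q (2*n+1) * qnum q (2*(L+1-n)+1) / qnum q (2*(L+1)+1) := by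
  obtain ⟨j, rfl⟩ : ∃ j, L = j + n := ⟨L - n, by omega⟩
  have h1 : j + n - n = j := by omega
  have h2 : j + n + 1 - n = j + 1 := by omega
  rw [h1, h2]
  have e : j + n + 1 = j + 1 + n := by omega
  rw [div_le_div_iff₀ (m_pos hq hq1 (j+n)) (m_pos hq hq1 (j+n+1))]
  have h := stepA hq hq1 j n
  have hm := m_pos hq hq1 n
  nlinarith [mul_le_mul_of_nonneg_left h hm.le]

lemma term_bound (hq : 0 < q) (hq1 : q < 1) (L n : ℕ) (hn : n ≤ L) :
    qnum q (2*n+1) * qnum q (2*(L+1-n)+1) / qnum q (2*(L+1)+1)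
      - qnum q (2*n+1) * qnum q (2*(L-n)+1) / qnum q (2*L+1)
      ≤ q^(4*(L-n)+2) / (1-q^2)^2 := by
  obtain ⟨hlt, hpos⟩ := basic hq hq1
  obtain ⟨j, rfl⟩ : ∃ j, L = j + n := ⟨L - n, by omega⟩
  have h1 : j + n - n = j := by omega
  have h2 : j + n + 1 - n = j + 1 := by omega
  rw [h1, h2]
  have hmn := m_pos hq hq1 n
  have hmjn := m_pos hq hq1 (j+n)
  have hmjn1 := m_pos hq hq1 (j+n+1)
  -- step 1 : first term ≤ m n * q^(2n)
  have s1 : qnum q (2*n+1) * qnum q (2*(j+1)+1) / qnum q (2*(j+n+1)+1)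
      ≤ qnum q (2*n+1) * q^(2*n) := by
    rw [div_le_iff₀ hmjn1]
    have h5 : qnum q (2*(j+1)+1) ≤ q^(2*n) * qnum q (2*((j+1)+n)+1) := m_le hq hq1 (j+1) n
    have e : (j+1) + n = j + n + 1 := by omega
    rw [e] at h5
    nlinarith [mul_le_mul_of_nonneg_left h5 hmn.le]
  -- step 2 : m n * q^(2n) - m n * m j / m (j+n) = m n * (q^(2n) m (j+n) - m j) / m (j+n)
  have s2 : qnum q (2*n+1) * q^(2*n) - qnum q (2*n+1) * qnum q (2*j+1) / qnum q (2*(j+n)+1)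
      = qnum q (2*n+1) * (q^(2*n) * qnum q (2*(j+n)+1) - qnum q (2*j+1)) / qnum q (2*(j+n)+1) := by
    field_simp
  -- step 3 : the quotient bound
  have s3 : qnum q (2*n+1) * (q^(2*n) * qnum q (2*(j+n)+1) - qnum q (2*j+1)) / qnum q (2*(j+n)+1)
      ≤ (q⁻¹^(2*n) / (1-q^2)) * (q^(2*j+2) / (1-q^2)) / q⁻¹^(2*(j+n)) := by
    apply div_le_div₀
    · positivity
    · apply mul_le_mul (m_upper hq hq1 n) (m_diff_le hq hq1 j n)
        (by linarith [m_le hq hq1 j n]) (by positivity)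
    · positivity
    · exact m_lower hq hq1 (j+n)
  have s4 : (q⁻¹^(2*n) / (1-q^2)) * (q^(2*j+2) / (1-q^2)) / q⁻¹^(2*(j+n))
      = q^(4*j+2) / (1-q^2)^2 := by
    have hq0 : q ≠ 0 := ne_of_gt hq
    rw [inv_pow, inv_pow]
    field_simp
    ring
  linarith [s1, s2, s3, s4.le, s4.ge]

lemma geom_le {x : ℝ} (h0 : 0 ≤ x) (h1 : x < 1) (N : ℕ) :
    ∑ k ∈ Finset.range N, x^k ≤ 1/(1-x) := by
  rw [geom_sum_eq (ne_of_lt h1)]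
  rw [show x^N - 1 = -(1 - x^N) by ring, show x - 1 = -(1-x) by ring, neg_div_neg_eq]
  apply div_le_div₀ (by norm_num) (by nlinarith [pow_nonneg h0 N]) (by linarith) le_rfl

lemma F_nonneg (hq : 0 < q) (hq1 : q < 1) (l : ℕ) : 0 ≤ F q l := by
  apply Finset.sum_nonneg
  intro n _
  have := m_pos hq hq1 n
  have := m_pos hq hq1 (l - n)
  have := m_pos hq hq1 l
  positivity

lemma F_mono (hq : 0 < q) (hq1 : q < 1) (L : ℕ) : F q L ≤ F q (L+1) := by
  unfold F
  conv_rhs => rw [Finset.sum_range_succ]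
  have hlast : 0 ≤ qnum q (2*(L+1)+1) * qnum q (2*((L+1)-(L+1))+1) / qnum q (2*(L+1)+1) := by
    have := m_pos hq hq1 (L+1)
    have := m_pos hq hq1 ((L+1)-(L+1))
    positivity
  have hsum : ∑ n ∈ Finset.range (L+1),
      qnum q (2*n+1) * qnum q (2*(L-n)+1) / qnum q (2*L+1)
      ≤ ∑ n ∈ Finset.range (L+1),
      qnum q (2*n+1) * qnum q (2*((L+1)-n)+1) / qnum q (2*(L+1)+1) := by
    apply Finset.sum_le_sum
    intro n hn
    exact term_mono hq hq1 L n (by simpa using Finset.mem_range_succ_iff.mp hn)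
  linarith

lemma F_step (hq : 0 < q) (hq1 : q < 1) (L : ℕ) :
    F q (L+1) ≤ F q L + (1 + q^2/((1-q^2)^2 * (1-q^4))) := by
  obtain ⟨hlt, hpos⟩ := basic hq hq1
  have hpos4 : (0:ℝ) < 1 - q^4 := by nlinarith
  unfold F
  conv_lhs => rw [Finset.sum_range_succ]
  have hlast : qnum q (2*(L+1)+1) * qnum q (2*((L+1)-(L+1))+1) / qnum q (2*(L+1)+1) = 1 := by
    rw [Nat.sub_self]
    rw [show 2*0+1 = 1 by norm_num, qnum_one hq hq1, mul_one]
    exact div_self (ne_of_gt (m_pos hq hq1 (L+1)))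
  rw [hlast]
  have hsum : ∑ n ∈ Finset.range (L+1),
      qnum q (2*n+1) * qnum q (2*((L+1)-n)+1) / qnum q (2*(L+1)+1)
      ≤ (∑ n ∈ Finset.range (L+1),
          qnum q (2*n+1) * qnum q (2*(L-n)+1) / qnum q (2*L+1))
        + ∑ n ∈ Finset.range (L+1), q^(4*(L-n)+2) / (1-q^2)^2 := by
    rw [← Finset.sum_add_distrib]
    apply Finset.sum_le_sum
    intro n hn
    have hn' : n ≤ L := by simpa using Finset.mem_range_succ_iff.mp hn
    linarith [term_bound hq hq1 L n hn']
  have hgeo : ∑ n ∈ Finset.range (L+1), q^(4*(L-n)+2) / (1-q^2)^2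
      ≤ q^2/((1-q^2)^2 * (1-q^4)) := by
    have e : ∀ n ∈ Finset.range (L+1), q^(4*(L-n)+2) / (1-q^2)^2
        = (q^2/(1-q^2)^2) * (q^4)^(L-n) := by
      intro n hn
      rw [← pow_mul]
      rw [show 4*(L-n)+2 = 2 + 4*(L-n) by omega, pow_add]
      ring
    rw [Finset.sum_congr rfl e]
    rw [← Finset.mul_sum]
    have hre : ∑ n ∈ Finset.range (L+1), ((q^4)^(L-n) : ℝ)
        = ∑ n ∈ Finset.range (L+1), ((q^4)^n : ℝ) := by
      have := Finset.sum_range_reflect (fun k => ((q^4)^k : ℝ)) (L+1)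
      simpa using this
    rw [hre]
    have hg := geom_le (by positivity) (by nlinarith : q^4 < 1) (L+1)
    have h7 : (0:ℝ) ≤ q^2/(1-q^2)^2 := by positivity
    calc (q^2/(1-q^2)^2) * ∑ n ∈ Finset.range (L+1), ((q^4)^n : ℝ)
        ≤ (q^2/(1-q^2)^2) * (1/(1-q^4)) := by
          exact mul_le_mul_of_nonneg_left hg h7
      _ = q^2/((1-q^2)^2 * (1-q^4)) := by field_simp
  linarith

lemma sqrt_diff {a b c : ℝ} (ha : 0 ≤ a) (h1 : a ≤ b) (h2 : b ≤ a + c) :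
    |Real.sqrt b - Real.sqrt a| ≤ Real.sqrt c := by
  have hc : 0 ≤ c := by linarith
  have hb : 0 ≤ b := le_trans ha h1
  have hmono : Real.sqrt a ≤ Real.sqrt b := Real.sqrt_le_sqrt h1
  rw [abs_of_nonneg (by linarith)]
  have key : Real.sqrt b ≤ Real.sqrt a + Real.sqrt c := by
    have hsq : b ≤ (Real.sqrt a + Real.sqrt c)^2 := by
      have e : (Real.sqrt a + Real.sqrt c)^2
          = a + c + 2 * (Real.sqrt a * Real.sqrt c) := by
        rw [add_sq, Real.sq_sqrt ha, Real.sq_sqrt hc]; ring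
      nlinarith [mul_nonneg (Real.sqrt_nonneg a) (Real.sqrt_nonneg c)]
    calc Real.sqrt b ≤ Real.sqrt ((Real.sqrt a + Real.sqrt c)^2) := Real.sqrt_le_sqrt hsq
      _ = Real.sqrt a + Real.sqrt c := Real.sqrt_sq (by positivity)
  linarith



end Stmt9Aux

/-- With `m_l = [2l+1]_q` and `α_l = (∑_{n+k=l} m_n m_k/m_l)^{-1/2}` (so that
`α_l⁻¹ = √(∑_{n+k=l} m_n m_k/m_l)`), the supremum over `l ≥ 1` of
`max_{|l'-l| ≤ 1} |α_l⁻¹ - α_{l'}⁻¹|` is finite. -/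
theorem stmt9 (q : ℝ) (hq : 0 < q) (hq1 : q < 1) :
    ∃ S : ℝ, ∀ l l' : ℕ, 1 ≤ l → l' ≤ l + 1 → l ≤ l' + 1 →
      |Real.sqrt (∑ n ∈ Finset.range (l + 1),
          qnum q (2 * n + 1) * qnum q (2 * (l - n) + 1) / qnum q (2 * l + 1)) -
        Real.sqrt (∑ n ∈ Finset.range (l' + 1),
          qnum q (2 * n + 1) * qnum q (2 * (l' - n) + 1) / qnum q (2 * l' + 1))| ≤ S := by
  obtain ⟨hlt, hpos⟩ := Stmt9Aux.basic hq hq1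
  refine ⟨Real.sqrt (1 + q^2/((1-q^2)^2 * (1-q^4))), ?_⟩
  intro l l' h1 h2 h3
  have hFdef : ∀ k : ℕ, (∑ n ∈ Finset.range (k + 1),
      qnum q (2 * n + 1) * qnum q (2 * (k - n) + 1) / qnum q (2 * k + 1)) = Stmt9Aux.F q k :=
    fun k => rfl
  rw [hFdef, hFdef]
  rcases (by omega : l' = l ∨ l' = l + 1 ∨ l = l' + 1) with h | h | h
  · subst h; simp [Real.sqrt_nonneg]
  · subst h
    rw [abs_sub_comm]
    exact Stmt9Aux.sqrt_diff (Stmt9Aux.F_nonneg hq hq1 l)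
      (Stmt9Aux.F_mono hq hq1 l) (Stmt9Aux.F_step hq hq1 l)
  · subst h
    exact Stmt9Aux.sqrt_diff (Stmt9Aux.F_nonneg hq hq1 l')
      (Stmt9Aux.F_mono hq hq1 l') (Stmt9Aux.F_step hq hq1 l')
end

section
/- Let 0 < q < 1. Then for every l ∈ ℕ, ∑_{(k,n): |n+k-l| ≤ 1} ([2k+1]_q[2n+1]_q/[2l+1]_q)·q^{2k+2l-2n-2} ≤ 3·q^{-6} / ((1-q²)²(1-q⁴)), where the sum runs over pairs (k,n) ∈ ℕ² with |n + k - l| ≤ 1 (and the term is interpreted via [2k+1]_q[2n+1]_q/[2l+1]_q ≤ q^{-2}/(1-q²)² for such pairs). -/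
lemma qnum_odd (q : ℝ) (hq : 0 < q) (hq1 : q < 1) (m : ℕ) :
    qnum q (2*m+1) = q⁻¹ ^ (2*m) * (1 - q ^ (4*m+2)) / (1 - q^2) := by
  have hq0 : q ≠ 0 := hq.ne'
  have h1i : 1 < q⁻¹ := (one_lt_inv₀ hq).mpr hq1
  have hne : q - q⁻¹ ≠ 0 := by nlinarith
  have h2 : (1 : ℝ) - q^2 ≠ 0 := by nlinarith
  unfold qnum
  rw [div_eq_div_iff hne h2]
  field_simp
  have hX : q ^ (m * 2) * q⁻¹ ^ (m * 2) = 1 := by rw [← mul_pow, mul_inv_cancel₀ hq0, one_pow]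
  have hY : q * q⁻¹ = 1 := mul_inv_cancel₀ hq0
  linear_combination (q ^ 4 - q ^ 2) * q ^ (m * 2) * hX + (q ^ 2 - 1) * q⁻¹ ^ (m * 2) * hY

lemma term_bound (q : ℝ) (hq : 0 < q) (hq1 : q < 1) (k n l : ℕ)
    (hkn1 : k + n ≤ l + 1) (hkn2 : l ≤ k + n + 1) :
    qnum q (2*k+1) * qnum q (2*n+1) / qnum q (2*l+1) *
      q ^ (2*(k:ℤ) + 2*(l:ℤ) - 2*(n:ℤ) - 2) ≤ q⁻¹^6 * (q^4)^k / (1-q^2)^2 := by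
  have hq0 : q ≠ 0 := hq.ne'
  have h2pos : (0:ℝ) < 1 - q^2 := by nlinarith
  have hz : ∀ a : ℕ, q⁻¹ ^ a = q ^ (-(a:ℤ)) := fun a => by
    rw [inv_pow, ← zpow_natCast, ← zpow_neg]
  have hqpow : ∀ m : ℕ, 0 < 1 - q ^ (4*m+2) := fun m => by
    have : q ^ (4*m+2) < 1 := pow_lt_one₀ hq.le hq1 (by omega)
    linarith
  have hql : 1 - q^2 ≤ 1 - q ^ (4*l+2) := by
    have : q ^ (4*l+2) ≤ q^2 := pow_le_pow_of_le_one hq.le hq1.le (by omega)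
    linarith
  have key : qnum q (2*k+1) * qnum q (2*n+1) / qnum q (2*l+1) *
      q ^ (2*(k:ℤ) + 2*(l:ℤ) - 2*(n:ℤ) - 2)
      = (1 - q^(4*k+2)) * (1 - q^(4*n+2)) / ((1 - q^(4*l+2)) * (1-q^2))
        * q ^ (4*(l:ℤ) - 4*(n:ℤ) - 2) := by
    rw [qnum_odd q hq hq1, qnum_odd q hq hq1, qnum_odd q hq hq1, hz, hz, hz]
    have hpow : q ^ (-(2*k:ℤ):ℤ) * q ^ (-(2*n:ℤ):ℤ) / q ^ (-(2*l:ℤ):ℤ) *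
        q ^ (2*(k:ℤ) + 2*(l:ℤ) - 2*(n:ℤ) - 2) = q ^ (4*(l:ℤ) - 4*(n:ℤ) - 2) := by
      rw [← zpow_add₀ hq0, ← zpow_sub₀ hq0, ← zpow_add₀ hq0]
      congr 1
      ring
    rw [← hpow]
    have h3 : q ^ (-(2*l:ℤ):ℤ) ≠ 0 := zpow_ne_zero _ hq0
    have h4 : (1:ℝ) - q ^ (4*l+2) ≠ 0 := (hqpow l).ne'
    field_simp
    push_cast
    ring
  rw [key]
  have hC : (1 - q^(4*k+2)) * (1 - q^(4*n+2)) / ((1 - q^(4*l+2)) * (1-q^2))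
      ≤ 1 / (1-q^2)^2 := by
    apply div_le_div₀ zero_le_one
    · nlinarith [pow_nonneg hq.le (4*k+2), pow_nonneg hq.le (4*n+2),
        (hqpow k).le, (hqpow n).le]
    · positivity
    · nlinarith
  have hE : q ^ (4*(l:ℤ) - 4*(n:ℤ) - 2) ≤ q ^ (4*(k:ℤ) - 6) := by
    apply zpow_le_zpow_right_of_le_one₀ hq hq1.le
    omega
  have hEq : q ^ (4*(k:ℤ) - 6) = (q^4)^k * q⁻¹^6 := by
    rw [zpow_sub₀ hq0, show (4*(k:ℤ)) = ((4*k:ℕ):ℤ) by push_cast; ring,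
      zpow_natCast, pow_mul, show (6:ℤ) = ((6:ℕ):ℤ) by norm_num, zpow_natCast,
      div_eq_mul_inv, ← inv_pow]
  calc (1 - q^(4*k+2)) * (1 - q^(4*n+2)) / ((1 - q^(4*l+2)) * (1-q^2))
        * q ^ (4*(l:ℤ) - 4*(n:ℤ) - 2)
      ≤ 1 / (1-q^2)^2 * q ^ (4*(k:ℤ) - 6) := by
        apply mul_le_mul hC hE (zpow_nonneg hq.le _) (by positivity)
    _ = q⁻¹^6 * (q^4)^k / (1-q^2)^2 := by rw [hEq]; ring

/-- For `0 < q < 1` and every `l ∈ ℕ`,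
`∑_{(k,n) : |n+k-l| ≤ 1} ([2k+1]_q[2n+1]_q/[2l+1]_q)·q^{2k+2l-2n-2}
  ≤ 3q⁻⁶/((1-q²)²(1-q⁴))`. -/
theorem stmt10 (q : ℝ) (hq : 0 < q) (hq1 : q < 1) :
    ∀ l : ℕ,
      ∑ p ∈ (Finset.range (l + 2) ×ˢ Finset.range (l + 2)).filter
          (fun p => p.1 + p.2 ≤ l + 1 ∧ l ≤ p.1 + p.2 + 1),
        qnum q (2 * p.1 + 1) * qnum q (2 * p.2 + 1) / qnum q (2 * l + 1) *
          q ^ (2 * (p.1 : ℤ) + 2 * (l : ℤ) - 2 * (p.2 : ℤ) - 2) ≤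
      3 * q⁻¹ ^ 6 / ((1 - q ^ 2) ^ 2 * (1 - q ^ 4)) := by
  intro l
  have hq0 : q ≠ 0 := hq.ne'
  have h2pos : (0:ℝ) < 1 - q^2 := by nlinarith
  have h4pos : (0:ℝ) < 1 - q^4 := by nlinarith [pow_pos hq 4, pow_lt_one₀ hq.le hq1 (by norm_num : (4:ℕ) ≠ 0)]
  set g : ℕ → ℝ := fun k => q⁻¹^6 * (q^4)^k / (1-q^2)^2 with hg
  have hgnn : ∀ k, 0 ≤ g k := fun k => by
    simp only [hg]; positivity
  calc ∑ p ∈ (Finset.range (l + 2) ×ˢ Finset.range (l + 2)).filter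
          (fun p => p.1 + p.2 ≤ l + 1 ∧ l ≤ p.1 + p.2 + 1),
        qnum q (2 * p.1 + 1) * qnum q (2 * p.2 + 1) / qnum q (2 * l + 1) *
          q ^ (2 * (p.1 : ℤ) + 2 * (l : ℤ) - 2 * (p.2 : ℤ) - 2)
      ≤ ∑ p ∈ (Finset.range (l + 2) ×ˢ Finset.range (l + 2)).filter
          (fun p => p.1 + p.2 ≤ l + 1 ∧ l ≤ p.1 + p.2 + 1), g p.1 := by
        apply Finset.sum_le_sum
        intro p hp
        simp only [Finset.mem_filter] at hp
        exact term_bound q hq hq1 p.1 p.2 l hp.2.1 hp.2.2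
    _ = ∑ k ∈ Finset.range (l+2), ∑ n ∈ Finset.range (l+2),
          if k + n ≤ l + 1 ∧ l ≤ k + n + 1 then g k else 0 := by
        rw [Finset.sum_filter, Finset.sum_product]
    _ ≤ ∑ k ∈ Finset.range (l+2), 3 * g k := by
        apply Finset.sum_le_sum
        intro k _
        rw [← Finset.sum_filter, Finset.sum_const, nsmul_eq_mul]
        have hcard : ((Finset.range (l+2)).filter
            (fun n => k + n ≤ l + 1 ∧ l ≤ k + n + 1)).card ≤ 3 := by
          have hsub : (Finset.range (l+2)).filter
              (fun n => k + n ≤ l + 1 ∧ l ≤ k + n + 1) ⊆ Finset.Icc (l-1-k) (l+1-k) := by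
            intro n hn
            simp only [Finset.mem_filter, Finset.mem_range] at hn
            simp only [Finset.mem_Icc]
            omega
          have := Finset.card_le_card hsub
          rw [Nat.card_Icc] at this
          omega
        have hcard' : (((Finset.range (l+2)).filter
            (fun n => k + n ≤ l + 1 ∧ l ≤ k + n + 1)).card : ℝ) ≤ 3 := by
          exact_mod_cast hcard
        exact mul_le_mul_of_nonneg_right hcard' (hgnn k)
    _ = 3 * q⁻¹^6 / (1-q^2)^2 * ∑ k ∈ Finset.range (l+2), (q^4)^k := by
        rw [Finset.mul_sum]
        apply Finset.sum_congr rfl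
        intro k _
        simp only [hg]
        ring
    _ ≤ 3 * q⁻¹^6 / (1-q^2)^2 * (1 / (1-q^4)) := by
        apply mul_le_mul_of_nonneg_left _ (by positivity)
        rw [geom_sum_eq (by nlinarith : (q^4 : ℝ) ≠ 1)]
        rw [show ((q^4)^(l+2) - 1)/(q^4 - 1) = (1 - (q^4)^(l+2))/(1 - q^4) by
          rw [← neg_div_neg_eq]; ring_nf]
        apply div_le_div₀ zero_le_one _ h4pos le_rfl
        nlinarith [pow_nonneg (pow_nonneg hq.le 4) (l+2)]
    _ = 3 * q⁻¹ ^ 6 / ((1 - q ^ 2) ^ 2 * (1 - q ^ 4)) := by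
        rw [div_mul_div_comm, mul_one]
end
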